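/- Suppose in the periodic prisoner's dilemma the payoff-difference vector B = c₁·v(C,σ₁) + c₂·v(C,σ₂) + c_E·e for some constants c₁ ≥ 0, c₂ ≥ 0, c_E ∈ ℝ, where v(C,σ₁), v(C,σ₂) are Press-Dyson vectors built from probabilities in [0,1] and e = (−1,−1,−1,−1,1,1,1,1). Then −c₁ + c₂ − c_E = 2δR, −c_E = 2δP, S̄−T̄+δS+δT ≤ 2·min(δR,δP), and T̄−S̄+δS+δT ≥ 2·max(δR,δP). -/
import Mathlib



private lemma cons_val_five' {α : Type*} (x : α) (u : Fin 7 → α) :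
    Matrix.vecCons x u 5 = u 4 := rfl

private lemma cons_val_six' {α : Type*} (x : α) (u : Fin 7 → α) :
    Matrix.vecCons x u 6 = u 5 := rfl

private lemma cons_val_seven' {α : Type*} (x : α) (u : Fin 7 → α) :
    Matrix.vecCons x u 7 = u 6 := rfl

private lemma cons_val_five_b {α : Type*} (x : α) (u : Fin 6 → α) :
    Matrix.vecCons x u 5 = u 4 := rfl

private lemma cons_val_six_b {α : Type*} (x : α) (u : Fin 6 → α) :
    Matrix.vecCons x u 6 = u 5 := rfl

private lemma cons_val_five_c {α : Type*} (x : α) (u : Fin 5 → α) :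
    Matrix.vecCons x u 5 = u 4 := rfl

/-- Case 1 of the proof of Theorem 2: if B = c₁·v(C,σ₁) + c₂·v(C,σ₂) + c_E·e with
c₁, c₂ ≥ 0 and probabilities in [0,1], the existence condition (16) follows. -/
theorem stmt_14 (Tb Sb dR dS dT dP : ℝ) (hTS : Tb > Sb)
    (c₁ c₂ cE : ℝ) (hc₁ : c₁ ≥ 0) (hc₂ : c₂ ≥ 0)
    (p₁ p₂ p₃ p₄ q₁ q₂ q₃ q₄ : ℝ)
    (hp₁ : p₁ ∈ Set.Icc (0:ℝ) 1) (hp₂ : p₂ ∈ Set.Icc (0:ℝ) 1)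
    (hp₃ : p₃ ∈ Set.Icc (0:ℝ) 1) (hp₄ : p₄ ∈ Set.Icc (0:ℝ) 1)
    (hq₁ : q₁ ∈ Set.Icc (0:ℝ) 1) (hq₂ : q₂ ∈ Set.Icc (0:ℝ) 1)
    (hq₃ : q₃ ∈ Set.Icc (0:ℝ) 1) (hq₄ : q₄ ∈ Set.Icc (0:ℝ) 1)
    (heq : (![2*dR, Sb - Tb + dS + dT, Tb - Sb + dS + dT, 2*dP,
              -(2*dR), Sb - Tb - dS - dT, Tb - Sb - dS - dT, -(2*dP)] : Fin 8 → ℝ)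
      = c₁ • (![-1,-1,0,0,p₁,p₂,p₃,p₄] : Fin 8 → ℝ)
        + c₂ • (![q₁,q₂,q₃,q₄,-1,-1,0,0] : Fin 8 → ℝ)
        + cE • (![-1,-1,-1,-1,1,1,1,1] : Fin 8 → ℝ)) :
    -c₁ + c₂ - cE = 2*dR ∧ -cE = 2*dP
    ∧ Sb - Tb + dS + dT ≤ 2 * min dR dP
    ∧ Tb - Sb + dS + dT ≥ 2 * max dR dP := by
  obtain ⟨hp₁0, hp₁1⟩ := hp₁
  obtain ⟨hp₂0, hp₂1⟩ := hp₂
  obtain ⟨hp₃0, hp₃1⟩ := hp₃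
  obtain ⟨hp₄0, hp₄1⟩ := hp₄
  obtain ⟨hq₁0, hq₁1⟩ := hq₁
  obtain ⟨hq₂0, hq₂1⟩ := hq₂
  obtain ⟨hq₃0, hq₃1⟩ := hq₃
  obtain ⟨hq₄0, hq₄1⟩ := hq₄
  have e0 := congrFun heq 0
  have e1 := congrFun heq 1
  have e2 := congrFun heq 2
  have e3 := congrFun heq 3
  have e4 := congrFun heq 4
  have e5 := congrFun heq 5
  have e6 := congrFun heq 6
  have e7 := congrFun heq 7
  norm_num [Fin.isValue, cons_val_five', cons_val_six', cons_val_seven', cons_val_five_b, cons_val_six_b, cons_val_five_c, Matrix.cons_val_succ, Matrix.cons_val_zero, Matrix.cons_val_one,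
    Matrix.head_cons, Matrix.cons_val_two, Matrix.tail_cons, Matrix.cons_val_three,
    Matrix.cons_val_four, Pi.add_apply, Pi.smul_apply,
    smul_eq_mul] at e0 e1 e2 e3 e4 e5 e6 e7
  have a1 : c₁ * p₁ ≤ c₁ := mul_le_of_le_one_right hc₁ hp₁1
  have a2 : c₂ * q₁ ≤ c₂ := mul_le_of_le_one_right hc₂ hq₁1
  have a3 : c₁ * p₂ ≤ c₁ := mul_le_of_le_one_right hc₁ hp₂1
  have a4 : c₂ * q₂ ≤ c₂ := mul_le_of_le_one_right hc₂ hq₂1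
  have b1 : c₁ * p₄ ≥ 0 := mul_nonneg hc₁ hp₄0
  have b2 : c₂ * q₄ ≥ 0 := mul_nonneg hc₂ hq₄0
  have b3 : c₁ * p₃ ≥ 0 := mul_nonneg hc₁ hp₃0
  have b4 : c₂ * q₃ ≥ 0 := mul_nonneg hc₂ hq₃0
  have hcq1 : c₂ * q₁ = c₂ := by linarith
  have hcp4 : c₁ * p₄ = 0 := by linarith
  have h3a : Sb - Tb + dS + dT ≤ 2 * dR := by linarith
  have h3b : Sb - Tb + dS + dT ≤ 2 * dP := by linarith
  have h4a : 2 * dR ≤ Tb - Sb + dS + dT := by linarith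
  have h4b : 2 * dP ≤ Tb - Sb + dS + dT := by linarith
  refine ⟨by linarith, by linarith, ?_, ?_⟩
  · rcases le_total dR dP with h | h
    · rw [min_eq_left h]; exact h3a
    · rw [min_eq_right h]; exact h3b
  · rcases le_total dR dP with h | h
    · rw [max_eq_right h]; exact h4b
    · rw [max_eq_left h]; exact h4a
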